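/- The function x ↦ log(2^x − x − 1) is concave on (1, ∞); consequently, for reals a₁,…,a_n > 1 with ∑ a_v = (Δ+1)n and Δ ≥ 1, ∏_v (2^{a_v} − a_v − 1) ≤ (2^{Δ+1} − Δ − 1)^n. -/

import Mathlib

open Real

private lemma two_rpow_eq (x : ℝ) : (2 : ℝ) ^ x = Real.exp (Real.log 2 * x) := by
  rw [Real.rpow_def_of_pos (by norm_num)]

private lemma g_pos {x : ℝ} (hx : 1 < x) : 0 < (2 : ℝ) ^ x - x - 1 := by
  rw [two_rpow_eq]
  set L := Real.log 2 with hL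
  have hL1 : 0.6931471803 < L := Real.log_two_gt_d9
  have h1 : L * (x - 1) + 1 < Real.exp (L * (x - 1)) := by
    apply Real.add_one_lt_exp
    have : 0 < L * (x - 1) := by nlinarith
    linarith
  have h2 : Real.exp (L * x) = 2 * Real.exp (L * (x - 1)) := by
    rw [show L * x = L + L * (x - 1) by ring, Real.exp_add, Real.exp_log (by norm_num : (0:ℝ) < 2)]
  nlinarith [h1, h2]

private lemma key_ineq (x : ℝ) :
    Real.log 2 * Real.exp (Real.log 2 * x) * (2 - Real.log 2 * (x + 1)) < 1 := by
  set L := Real.log 2 with hL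
  set y := L * (x + 1) - 1 with hy
  have hL1 : L < 0.6931471808 := Real.log_two_lt_d9
  have hL0 : 0.6931471803 < L := Real.log_two_gt_d9
  have hE : Real.exp 1 < 2.7182818286 := Real.exp_one_lt_d9
  have hE0 : (0:ℝ) < Real.exp 1 := Real.exp_pos 1
  have h2 : Real.exp (-y) * Real.exp y = 1 := by rw [← Real.exp_add]; simp
  have h3 : 1 - y ≤ Real.exp (-y) := by
    have := Real.add_one_le_exp (-y); linarith
  have hey : 0 < Real.exp y := Real.exp_pos y
  have h4 : Real.exp y * (1 - y) ≤ 1 := by nlinarith [mul_le_mul_of_nonneg_right h3 hey.le]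
  have e1 : Real.exp (L * x) * 2 = Real.exp y * Real.exp 1 := by
    have : Real.exp (L * x) * Real.exp L = Real.exp y * Real.exp 1 := by
      rw [← Real.exp_add, ← Real.exp_add, hy]; ring_nf
    rwa [Real.exp_log (by norm_num : (0:ℝ) < 2)] at this
  have h5 : L * Real.exp 1 * (Real.exp y * (1 - y)) ≤ L * Real.exp 1 * 1 := by
    apply mul_le_mul_of_nonneg_left h4; positivity
  have h6 : 2 - L * (x + 1) = 1 - y := by rw [hy]; ring
  rw [h6]
  have h7 : L * Real.exp 1 < 2 := by nlinarith
  have h8 : L * Real.exp (L * x) * (1 - y) * 2 = L * Real.exp 1 * (Real.exp y * (1 - y)) := by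
    linear_combination (L * (1 - y)) * e1
  linarith [h5, h7, h8]

private lemma concave_part :
    ConcaveOn ℝ (Set.Ioi (1 : ℝ)) fun x : ℝ => Real.log ((2 : ℝ) ^ x - x - 1) := by
  set L := Real.log 2 with hL
  have hgd : ∀ x : ℝ, HasDerivAt (fun x : ℝ => (2:ℝ) ^ x - x - 1)
      (L * Real.exp (L * x) - 1) x := by
    intro x
    have h1 : HasDerivAt (fun x : ℝ => Real.exp (L * x)) (Real.exp (L * x) * L) x := by
      simpa using ((hasDerivAt_id x).const_mul L).exp
    have h2 : HasDerivAt (fun x : ℝ => Real.exp (L * x) - x - 1)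
        (Real.exp (L * x) * L - 1) x := by
      simpa using (h1.sub (hasDerivAt_id x)).sub_const 1
    have : (fun x : ℝ => (2:ℝ) ^ x - x - 1) = fun x : ℝ => Real.exp (L * x) - x - 1 := by
      funext t; rw [two_rpow_eq]
    rw [this]
    convert h2 using 1; ring
  have hf' : ∀ x ∈ interior (Set.Ioi (1:ℝ)), HasDerivAt
      (fun x : ℝ => Real.log ((2:ℝ) ^ x - x - 1))
      ((L * Real.exp (L * x) - 1) / ((2:ℝ) ^ x - x - 1)) x := by
    intro x hx
    rw [interior_Ioi] at hx
    exact (hgd x).log (ne_of_gt (g_pos hx))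
  have hf'' : ∀ x ∈ interior (Set.Ioi (1:ℝ)), HasDerivAt
      (fun x : ℝ => (L * Real.exp (L * x) - 1) / ((2:ℝ) ^ x - x - 1))
      ((L * (L * Real.exp (L * x)) * ((2:ℝ) ^ x - x - 1)
        - (L * Real.exp (L * x) - 1) * (L * Real.exp (L * x) - 1))
        / ((2:ℝ) ^ x - x - 1) ^ 2) x := by
    intro x hx
    rw [interior_Ioi] at hx
    have h1 : HasDerivAt (fun x : ℝ => Real.exp (L * x)) (Real.exp (L * x) * L) x := by
      simpa using ((hasDerivAt_id x).const_mul L).exp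
    have h2 : HasDerivAt (fun x : ℝ => L * Real.exp (L * x) - 1)
        (L * (L * Real.exp (L * x))) x := by
      have := (h1.const_mul L).sub_const 1
      rw [show L * (L * Real.exp (L * x)) = L * (Real.exp (L * x) * L) by ring]; exact this
    exact h2.div (hgd x) (ne_of_gt (g_pos hx))
  apply concaveOn_of_hasDerivWithinAt2_nonpos (convex_Ioi 1)
    (f' := fun x => (L * Real.exp (L * x) - 1) / ((2:ℝ) ^ x - x - 1))
    (f'' := fun x => (L * (L * Real.exp (L * x)) * ((2:ℝ) ^ x - x - 1)
        - (L * Real.exp (L * x) - 1) * (L * Real.exp (L * x) - 1))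
        / ((2:ℝ) ^ x - x - 1) ^ 2)
  · intro x hx
    exact ((hgd x).log (ne_of_gt (g_pos hx))).continuousAt.continuousWithinAt
  · intro x hx; exact (hf' x hx).hasDerivWithinAt
  · intro x hx; exact (hf'' x hx).hasDerivWithinAt
  · intro x hx
    rw [interior_Ioi] at hx
    apply div_nonpos_of_nonpos_of_nonneg _ (sq_nonneg _)
    have hg := g_pos hx
    have hkey := key_ineq x
    have hrw : (2:ℝ) ^ x = Real.exp (L * x) := two_rpow_eq x
    rw [hrw] at hg ⊢
    nlinarith [hkey, hg]

theorem log_two_pow_sub_linear_concave_and_product_bound :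
    (ConcaveOn ℝ (Set.Ioi (1 : ℝ)) fun x : ℝ => Real.log ((2 : ℝ) ^ x - x - 1)) ∧
    ∀ (n Δ : ℕ) (a : Fin n → ℝ), 1 ≤ n → 1 ≤ Δ → (∀ v, 1 < a v) →
      (∑ v, a v = ((Δ : ℝ) + 1) * n) →
      ∏ v, ((2 : ℝ) ^ (a v) - a v - 1)
        ≤ ((2 : ℝ) ^ ((Δ : ℝ) + 1) - (Δ : ℝ) - 1) ^ n := by
  refine ⟨concave_part, ?_⟩
  intro n Δ a hn hΔ ha hsum
  have hn0 : (0:ℝ) < n := by positivity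
  have hΔ1 : (1:ℝ) < (Δ:ℝ) + 1 := by
    have : (1:ℝ) ≤ (Δ:ℝ) := by exact_mod_cast hΔ
    linarith
  -- Jensen
  have hjen := concave_part.le_map_sum (t := Finset.univ) (w := fun _ : Fin n => (n:ℝ)⁻¹)
    (p := a) (fun i _ => by positivity)
    (by simp [Finset.sum_const]; field_simp)
    (fun i _ => ha i)
  have hpt : ∑ i : Fin n, (n:ℝ)⁻¹ • a i = (Δ:ℝ) + 1 := by
    simp only [smul_eq_mul, ← Finset.mul_sum, hsum]
    field_simp
  rw [hpt] at hjen
  simp only [smul_eq_mul, ← Finset.mul_sum] at hjen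
  have hsum_log : ∑ i : Fin n, Real.log ((2:ℝ) ^ (a i) - a i - 1)
      ≤ n * Real.log ((2:ℝ) ^ ((Δ:ℝ) + 1) - ((Δ:ℝ) + 1) - 1) := by
    have := mul_le_mul_of_nonneg_left hjen hn0.le
    rw [← mul_assoc, mul_inv_cancel₀ (ne_of_gt hn0), one_mul] at this
    exact this
  have hGpos : 0 < (2:ℝ) ^ ((Δ:ℝ) + 1) - ((Δ:ℝ) + 1) - 1 := g_pos hΔ1
  have hprod : ∏ v, ((2:ℝ) ^ (a v) - a v - 1)
      = Real.exp (∑ i : Fin n, Real.log ((2:ℝ) ^ (a i) - a i - 1)) := by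
    rw [Real.exp_sum]
    exact Finset.prod_congr rfl fun i _ => (Real.exp_log (g_pos (ha i))).symm
  rw [hprod]
  calc Real.exp (∑ i : Fin n, Real.log ((2:ℝ) ^ (a i) - a i - 1))
      ≤ Real.exp (n * Real.log ((2:ℝ) ^ ((Δ:ℝ) + 1) - ((Δ:ℝ) + 1) - 1)) :=
        Real.exp_le_exp.mpr hsum_log
    _ = ((2:ℝ) ^ ((Δ:ℝ) + 1) - ((Δ:ℝ) + 1) - 1) ^ n := by
        rw [Real.exp_nat_mul, Real.exp_log hGpos]
    _ ≤ ((2:ℝ) ^ ((Δ:ℝ) + 1) - (Δ:ℝ) - 1) ^ n := by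
        apply pow_le_pow_left₀ hGpos.le; linarith
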